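/- Fix τ ∈ K, char K = 0, τ+1 ≠ 0, and let D = y(y-1)((yτ+1)/(τ+1))·d/dy on K[y]. Then the leading coefficient of the degree-(2i+1) polynomial D^i((y-1)/(τ+1)) equals (2i-1)!!·τ^i/(τ+1)^{i+1} for all i ≥ 0. -/

import Mathlib

open Polynomial

variable {K : Type*} [Field K]

/-- The differential operator `D = y(y-1)((yτ+1)/(τ+1))·d/dy` on `K[y]`. -/
noncomputable def opD (τ : K) (p : Polynomial K) : Polynomial K :=
  Polynomial.C ((τ + 1)⁻¹) *
    (Polynomial.X * (Polynomial.X - 1) * (Polynomial.C τ * Polynomial.X + 1)) *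
    Polynomial.derivative p

lemma opD_natDegree_le (τ : K) (p : Polynomial K) :
    (opD τ p).natDegree ≤ p.natDegree + 2 := by
  rcases eq_or_ne p.natDegree 0 with h | h
  · have hder : Polynomial.derivative p = 0 := by
      rw [Polynomial.natDegree_eq_zero] at h
      obtain ⟨a, rfl⟩ := h
      simp
    simp [opD, hder]
  · have h1 : 1 ≤ p.natDegree := Nat.one_le_iff_ne_zero.mpr h
    refine (Polynomial.natDegree_mul_le (p := Polynomial.C ((τ + 1)⁻¹) *
      (Polynomial.X * (Polynomial.X - 1) * (Polynomial.C τ * Polynomial.X + 1)))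
      (q := Polynomial.derivative p)).trans ?_
    have hd : (Polynomial.derivative p).natDegree ≤ p.natDegree - 1 :=
      Polynomial.natDegree_derivative_le p
    have hc : (Polynomial.C ((τ + 1)⁻¹) *
        (Polynomial.X * (Polynomial.X - 1) * (Polynomial.C τ * Polynomial.X + 1))).natDegree
        ≤ 3 := by
      compute_degree
    omega

lemma opD_iter_natDegree_le (τ : K) (i : ℕ) :
    ((opD τ)^[i] (Polynomial.C ((τ + 1)⁻¹) * (Polynomial.X - 1))).natDegree ≤ 2 * i + 1 := by
  induction i with
  | zero =>
      simpa using (Polynomial.natDegree_mul_le.trans (by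
        have : ((Polynomial.X : Polynomial K) - 1).natDegree ≤ 1 := by compute_degree
        simp only [Polynomial.natDegree_C]
        omega))
  | succ n ih =>
      rw [Function.iterate_succ_apply']
      refine (opD_natDegree_le τ _).trans ?_
      omega

lemma cubic_eq (τ : K) :
    Polynomial.X * (Polynomial.X - 1) * (Polynomial.C τ * Polynomial.X + 1)
      = Polynomial.C τ * Polynomial.X ^ 3 + (1 - Polynomial.C τ) * Polynomial.X ^ 2
        - Polynomial.X := by
  ring

lemma opD_coeff_top (τ : K) (p : Polynomial K) (i : ℕ) (hp : p.natDegree ≤ 2 * i + 1) :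
    (opD τ p).coeff (2 * (i + 1) + 1)
      = (τ + 1)⁻¹ * (τ * ((2 * i + 1 : ℕ) * p.coeff (2 * i + 1))) := by
  have h2 : p.coeff (2 * i + 2) = 0 :=
    Polynomial.coeff_eq_zero_of_natDegree_lt (by omega)
  have h3 : p.coeff (2 * i + 3) = 0 :=
    Polynomial.coeff_eq_zero_of_natDegree_lt (by omega)
  have : opD τ p = Polynomial.C ((τ + 1)⁻¹) *
      ((Polynomial.C τ * (Polynomial.X ^ 3 * Polynomial.derivative p))
        + ((1 - Polynomial.C τ) * (Polynomial.X ^ 2 * Polynomial.derivative p)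
          - Polynomial.X * Polynomial.derivative p)) := by
    unfold opD; rw [cubic_eq]; ring
  rw [this]
  have e1 : 2 * (i + 1) + 1 = 2 * i + 3 := by ring
  have e2 : (2 * i : ℕ) + 3 = 2 * i + 3 := rfl
  rw [e1]
  have hd0 : (Polynomial.derivative p).coeff (2 * i) = p.coeff (2 * i + 1) * (2 * i + 1) :=
by rw [Polynomial.coeff_derivative]; push_cast; ring
  have hd1 : (Polynomial.derivative p).coeff (2 * i + 1) = 0 := by
    rw [Polynomial.coeff_derivative]
    simpa using Or.inl h2
  have hd2 : (Polynomial.derivative p).coeff (2 * i + 2) = 0 := by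
    rw [Polynomial.coeff_derivative]
    simpa using Or.inl h3
  have hA : (Polynomial.X ^ 3 * Polynomial.derivative p).coeff (2 * i + 3)
      = (Polynomial.derivative p).coeff (2 * i) :=
    Polynomial.coeff_X_pow_mul (Polynomial.derivative p) 3 (2 * i)
  have hB : (Polynomial.X ^ 2 * Polynomial.derivative p).coeff (2 * i + 3)
      = (Polynomial.derivative p).coeff (2 * i + 1) := by
    have h := Polynomial.coeff_X_pow_mul (Polynomial.derivative p) 2 (2 * i + 1)
    rwa [show 2 * i + 1 + 2 = 2 * i + 3 by ring] at h
  have hC : (Polynomial.X * Polynomial.derivative p).coeff (2 * i + 3)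
      = (Polynomial.derivative p).coeff (2 * i + 2) := by
    have h := Polynomial.coeff_X_mul (p := Polynomial.derivative p) (n := 2 * i + 2)
    rwa [show 2 * i + 2 + 1 = 2 * i + 3 by ring] at h
  simp only [Polynomial.coeff_C_mul, Polynomial.coeff_add, Polynomial.coeff_sub,
    sub_mul, one_mul]
  rw [hA, hB, hC, hd0, hd1, hd2]
  push_cast
  ring

theorem opD_iterate_leadingCoeff [CharZero K] (τ : K) (hτ1 : τ + 1 ≠ 0) (i : ℕ) :
    ((opD τ)^[i] (Polynomial.C ((τ + 1)⁻¹) * (Polynomial.X - 1))).coeff (2 * i + 1)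
      = (Nat.doubleFactorial (2 * i - 1) : K) * τ ^ i / (τ + 1) ^ (i + 1) := by
  induction i with
  | zero =>
      simp only [Function.iterate_zero, id_eq]
      rw [show 2 * 0 + 1 = 1 from rfl, Polynomial.coeff_C_mul, Polynomial.coeff_sub,
        Polynomial.coeff_X_one, Polynomial.coeff_one,
        show Nat.doubleFactorial (2 * 0 - 1) = 1 from rfl]
      rw [if_neg one_ne_zero]
      rw [eq_div_iff (pow_ne_zero 1 hτ1)]
      field_simp
      simp
  | succ n ih =>
      rw [Function.iterate_succ_apply']
      rw [opD_coeff_top τ _ n (opD_iter_natDegree_le τ n), ih]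
      have hdf : (Nat.doubleFactorial (2 * (n + 1) - 1) : K)
          = (2 * n + 1 : ℕ) * (Nat.doubleFactorial (2 * n - 1) : K) := by
        rcases n with _ | m
        · norm_num [Nat.doubleFactorial]
        · have : 2 * (m + 1 + 1) - 1 = (2 * (m + 1) - 1) + 2 := by omega
          rw [this, Nat.doubleFactorial_add_two,
            show (2 * (m + 1) - 1 : ℕ) + 2 = 2 * (m + 1) + 1 by omega]
          push_cast
          ring
      rw [hdf]
      field_simp
      ring
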